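/- Let n, d ≥ 1 be integers with nd ≥ 2. For a tuple of integers (h_1,…,h_{nd−1}) with nd ≤ h_j ≤ nd + j − 1 for each j, let Λ(h) denote the multiset consisting of the one-point interval [nd, nd] together with the intervals [nd − j, h_j] and [h_j + 1, nd + j] for j = 1,…,nd−1. Then the map h ↦ Λ(h) is injective on the set of all such tuples, and consequently the number of admissible proper systems with parameters m = 2nd and σ(i) = min(i, 2nd − i), consisting of exactly 2nd − 1 intervals, is at least (nd − 1)!. -/

import Mathlib

/-- `IsProperSystem m σ S` : `S` is a *proper system* with parameters `(m, σ)`, i.e. a finite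
multiset of closed intervals `[a,b]` with integer endpoints (encoded as pairs `(a,b)` of
integers, one-point intervals `a = b` allowed) contained in `[0,m]`, such that for every
integer `i ∈ [0,m]` the number of intervals of `S` containing `i`, counted with multiplicity,
equals `σ i`. -/
def IsProperSystem (m : ℤ) (σ : ℤ → ℕ) (S : Multiset (ℤ × ℤ)) : Prop :=
  (∀ I ∈ S, 0 ≤ I.1 ∧ I.1 ≤ I.2 ∧ I.2 ≤ m) ∧
  ∀ i : ℤ, 0 ≤ i → i ≤ m →
    (S.filter fun I => I.1 ≤ i ∧ i ≤ I.2).card = σ i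

/-- The *graph* of a system of intervals in `[0,m]` enumerated (with multiplicity) by
`f : Fin t → ℤ × ℤ` : its vertices are the `t` intervals (`Sum.inl j` is the `j`-th interval)
together with `m` additional vertices `w_0, …, w_{m-1}` (`Sum.inr i` is `w_i`), and `w_i` is
adjacent exactly to the intervals whose right endpoint is `i` and to the intervals whose
left endpoint is `i + 1`. -/
def systemGraph (m : ℕ) {t : ℕ} (f : Fin t → ℤ × ℤ) : SimpleGraph (Fin t ⊕ Fin m) :=
  SimpleGraph.fromRel fun u v =>
    match u, v with
    | Sum.inl j, Sum.inr i => (f j).2 = (i : ℤ) ∨ (f j).1 = (i : ℤ) + 1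
    | _, _ => False

/-- A multiset of intervals in `[0,m]` is *admissible* if its graph is a tree.  (The graph is
independent, up to isomorphism, of the chosen enumeration of the multiset.) -/
def IsAdmissible (m : ℕ) (S : Multiset (ℤ × ℤ)) : Prop :=
  ∃ (t : ℕ) (f : Fin t → ℤ × ℤ), (List.ofFn f : Multiset (ℤ × ℤ)) = S ∧
    (systemGraph m f).IsTree

/-- `IsMarkedSystem m σ t M` : `M` is a *marked admissible proper system* with parameters
`(m, σ)` consisting of exactly `t` intervals: a finite multiset of pairs `(I, p)` where `p`
is an integer point of the interval `I`, whose multiset of first components is an admissible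
proper system with parameters `(m, σ)` consisting of `t` intervals. -/
def IsMarkedSystem (m : ℕ) (σ : ℤ → ℕ) (t : ℕ) (M : Multiset ((ℤ × ℤ) × ℤ)) : Prop :=
  (∀ p ∈ M, p.1.1 ≤ p.2 ∧ p.2 ≤ p.1.2) ∧
  IsProperSystem m σ (M.map Prod.fst) ∧
  IsAdmissible m (M.map Prod.fst) ∧
  M.card = t

/-- The multiset `Λ(h)` consisting of the one-point interval `[N, N]` together with, for each
`j ∈ {1, …, N-1}`, the two intervals `[N - j, h j]` and `[h j + 1, N + j]`. -/
def squareSystem (N : ℕ) (h : ℕ → ℤ) : Multiset (ℤ × ℤ) :=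
  ((N : ℤ), (N : ℤ)) ::ₘ
    (Finset.Icc 1 (N - 1)).val.bind fun j =>
      {((N : ℤ) - j, h j), (h j + 1, (N : ℤ) + j)}

lemma mem_squareSystem {N : ℕ} {h : ℕ → ℤ} {I : ℤ × ℤ} :
    I ∈ squareSystem N h ↔ I = ((N:ℤ), (N:ℤ)) ∨
      ∃ j : ℕ, 1 ≤ j ∧ j ≤ N - 1 ∧ (I = ((N:ℤ) - j, h j) ∨ I = (h j + 1, (N:ℤ) + j)) := by
  simp only [squareSystem, Multiset.mem_cons, Multiset.mem_bind, Finset.mem_val,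
    Finset.mem_Icc, Multiset.insert_eq_cons, Multiset.mem_singleton]
  constructor
  · rintro (rfl | ⟨j, ⟨h1, h2⟩, (rfl | rfl)⟩)
    · exact Or.inl rfl
    · exact Or.inr ⟨j, h1, h2, Or.inl rfl⟩
    · exact Or.inr ⟨j, h1, h2, Or.inr rfl⟩
  · rintro (rfl | ⟨j, h1, h2, (rfl | rfl)⟩)
    · exact Or.inl rfl
    · exact Or.inr ⟨j, ⟨h1, h2⟩, Or.inl rfl⟩
    · exact Or.inr ⟨j, ⟨h1, h2⟩, Or.inr rfl⟩

lemma card_squareSystem (N : ℕ) (hN : 1 ≤ N) (h : ℕ → ℤ) :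
    (squareSystem N h).card = 2 * N - 1 := by
  simp only [squareSystem, Multiset.card_cons, Multiset.card_bind]
  rw [Multiset.map_congr rfl (fun j _ => by
    show (({((N : ℤ) - j, h j), (h j + 1, (N : ℤ) + j)} : Multiset (ℤ×ℤ)).card) = 2
    rfl)]
  rw [Multiset.map_const', Multiset.sum_replicate, smul_eq_mul]
  have : (Finset.Icc 1 (N-1)).val.card = N - 1 := by
    rw [← Finset.card_def, Nat.card_Icc]; omega
  rw [this]; omega

lemma squareSystem_inj (N : ℕ) (hN : 2 ≤ N) (h h' : ℕ → ℤ)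
    (hb : ∀ j : ℕ, 1 ≤ j → j ≤ N - 1 → (N : ℤ) ≤ h j ∧ h j ≤ (N : ℤ) + j - 1)
    (hb' : ∀ j : ℕ, 1 ≤ j → j ≤ N - 1 → (N : ℤ) ≤ h' j ∧ h' j ≤ (N : ℤ) + j - 1)
    (heq : squareSystem N h = squareSystem N h') :
    ∀ j : ℕ, 1 ≤ j → j ≤ N - 1 → h j = h' j := by
  intro j hj1 hj2
  have hmem : ((N:ℤ) - j, h j) ∈ squareSystem N h' := by
    rw [← heq]
    exact mem_squareSystem.2 (Or.inr ⟨j, hj1, hj2, Or.inl rfl⟩)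
  rcases mem_squareSystem.1 hmem with hP | ⟨j', hj1', hj2', hA | hB⟩
  · exfalso
    have := congrArg Prod.fst hP
    simp only at this
    have hjN : (j:ℤ) ≤ (N:ℤ) - 1 := by exact_mod_cast Nat.cast_le.mpr hj2 |>.trans (by push_cast; omega)
    omega
  · have h1 := congrArg Prod.fst hA
    have h2 := congrArg Prod.snd hA
    simp only at h1 h2
    have : j = j' := by omega
    subst this; exact h2
  · exfalso
    have h1 := congrArg Prod.fst hB
    simp only at h1
    have := (hb' j' hj1' hj2').1
    omega

lemma Multiset.filter_bind' {α β : Type*} (s : Multiset α) (f : α → Multiset β)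
    (p : β → Prop) [DecidablePred p] :
    (s.bind f).filter p = s.bind fun a => (f a).filter p := by
  induction s using Multiset.induction with
  | empty => simp
  | cons a s ih => simp [Multiset.cons_bind, Multiset.filter_add, ih]

lemma count_squareSystem (N : ℕ) (hN : 2 ≤ N) (h : ℕ → ℤ)
    (hb : ∀ j : ℕ, 1 ≤ j → j ≤ N - 1 → (N : ℤ) ≤ h j ∧ h j ≤ (N : ℤ) + j - 1)
    (i : ℤ) (h0 : 0 ≤ i) (h2 : i ≤ 2 * N) :
    ((squareSystem N h).filter fun I => I.1 ≤ i ∧ i ≤ I.2).card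
      = (min i (2 * N - i)).toNat := by
  classical
  set c : ℕ := ((N:ℤ) - i).toNat + (i - (N:ℤ)).toNat with hc
  simp only [squareSystem, Multiset.filter_cons, Multiset.card_add]
  rw [Multiset.filter_bind', Multiset.card_bind]
  have hmap : ((Finset.Icc 1 (N-1)).val.map
      (Multiset.card ∘ fun j : ℕ => Multiset.filter (fun I => I.1 ≤ i ∧ i ≤ I.2)
        {((N : ℤ) - (j:ℤ), h j), (h j + 1, (N : ℤ) + (j:ℤ))})) =
      ((Finset.Icc 1 (N-1)).val.map (fun j => if c ≤ j then 1 else 0)) := by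
    apply Multiset.map_congr rfl
    intro j hj
    rw [Finset.mem_val, Finset.mem_Icc] at hj
    obtain ⟨hbl, hbr⟩ := hb j hj.1 hj.2
    simp only [Function.comp_apply, Multiset.insert_eq_cons, Multiset.filter_cons,
      Multiset.filter_singleton, Multiset.card_add]
    by_cases hcj : c ≤ j
    · by_cases hA : i ≤ h j
      · rw [if_pos ⟨by omega, hA⟩, if_neg (by push_neg; intro hl; omega)]
        simp [hcj]
      · rw [if_neg (by push_neg; intro hl; omega), if_pos ⟨by omega, by omega⟩]
        simp [hcj]
    · rw [if_neg (by intro ⟨u1,u2⟩; omega), if_neg (by intro ⟨u1,u2⟩; omega)]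
      simp [hcj]
  rw [hmap]
  have hsum : ((Finset.Icc 1 (N-1)).val.map (fun j => if c ≤ j then 1 else 0)).sum
      = ((Finset.Icc 1 (N-1)).filter (fun j => c ≤ j)).card := by
    rw [Finset.card_filter]
    rfl
  rw [hsum]
  have hfil : (Finset.Icc 1 (N-1)).filter (fun j => c ≤ j) = Finset.Icc (max 1 c) (N-1) := by
    ext j
    simp only [Finset.mem_filter, Finset.mem_Icc, max_le_iff]
    omega
  rw [hfil, Nat.card_Icc]
  rcases le_total i ((2:ℤ) * N - i) with hm | hm
  · rw [min_eq_left hm]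
    split_ifs with hiN
    · simp only [Multiset.card_singleton]; omega
    · simp only [Multiset.card_zero]; omega
  · rw [min_eq_right hm]
    split_ifs with hiN
    · simp only [Multiset.card_singleton]; omega
    · simp only [Multiset.card_zero]; omega

lemma nodup_squareSystem (N : ℕ) (hN : 2 ≤ N) (h : ℕ → ℤ)
    (hb : ∀ j : ℕ, 1 ≤ j → j ≤ N - 1 → (N : ℤ) ≤ h j ∧ h j ≤ (N : ℤ) + j - 1) :
    (squareSystem N h).Nodup := by
  rw [squareSystem, Multiset.nodup_cons]
  constructor
  · intro hmem
    rcases Multiset.mem_bind.1 hmem with ⟨j, hj, hmem'⟩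
    rw [Finset.mem_val, Finset.mem_Icc] at hj
    obtain ⟨hbl, hbr⟩ := hb j hj.1 hj.2
    simp only [Multiset.insert_eq_cons, Multiset.mem_cons, Multiset.mem_singleton] at hmem'
    rcases hmem' with hh | hh <;> · have := congrArg Prod.fst hh; simp only at this; omega
  · rw [Multiset.nodup_bind]
    constructor
    · intro j hj
      rw [Finset.mem_val, Finset.mem_Icc] at hj
      obtain ⟨hbl, hbr⟩ := hb j hj.1 hj.2
      simp only [Multiset.insert_eq_cons, Multiset.nodup_cons, Multiset.mem_singleton,
        Multiset.nodup_singleton, and_true]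
      intro hh
      have := congrArg Prod.fst hh; simp only at this; omega
    · apply Multiset.Nodup.pairwise _ (Finset.Icc 1 (N-1)).nodup
      intro j hj j' hj' hne
      rw [Finset.mem_val, Finset.mem_Icc] at hj hj'
      obtain ⟨hbl, hbr⟩ := hb j hj.1 hj.2
      obtain ⟨hbl', hbr'⟩ := hb j' hj'.1 hj'.2
      rw [Function.onFun, Multiset.disjoint_left]
      intro I hI hI'
      simp only [Multiset.insert_eq_cons, Multiset.mem_cons, Multiset.mem_singleton] at hI hI'
      have hjj' : (j:ℤ) ≠ (j':ℤ) := by exact_mod_cast fun e => hne (Nat.cast_injective e)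
      rcases hI with rfl | rfl <;> rcases hI' with hh | hh <;>
        · have h1 := congrArg Prod.fst hh; have h2 := congrArg Prod.snd hh
          simp only at h1 h2; omega

open SimpleGraph in
lemma walk_support_get {V : Type*} {G : SimpleGraph V} {u v : V} (p : G.Walk u v) :
    ∀ (i : ℕ) (hi : i < p.support.length), p.support.get ⟨i, hi⟩ = p.getVert i := by
  induction p with
  | nil => intro i hi; simp only [SimpleGraph.Walk.support_nil, List.length_singleton] at hi
           interval_cases i
           · simp [SimpleGraph.Walk.getVert]
  | cons ha q ih =>
      intro i hi
      match i with
      | 0 => simp [SimpleGraph.Walk.support_cons, SimpleGraph.Walk.getVert]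
      | (i+1) =>
        have h1 : (SimpleGraph.Walk.cons ha q).support.get ⟨i + 1, hi⟩
            = q.support.get ⟨i, by
              have := hi; rw [SimpleGraph.Walk.support_cons] at this
              simpa using this⟩ := by
          simp only [SimpleGraph.Walk.support_cons]
          rfl
        rw [h1, SimpleGraph.Walk.getVert_cons_succ]
        apply ih

open SimpleGraph in
lemma isAcyclic_of_level {V : Type*} (G : SimpleGraph V) (ρ : V → ℕ)
    (hne : ∀ ⦃u v⦄, G.Adj u v → ρ u ≠ ρ v)
    (huniq : ∀ ⦃v u w⦄, G.Adj v u → G.Adj v w → ρ u < ρ v → ρ w < ρ v → u = w) :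
    G.IsAcyclic := by
  classical
  intro v c hc
  -- find a vertex of maximal level on the cycle
  obtain ⟨u, hu_mem, hu_max⟩ : ∃ u ∈ c.support, ∀ x ∈ c.support, ρ x ≤ ρ u := by
    obtain ⟨u, hu1, hu2⟩ := Finset.exists_max_image c.support.toFinset ρ
      ⟨v, List.mem_toFinset.2 c.start_mem_support⟩
    exact ⟨u, List.mem_toFinset.1 hu1, fun x hx => hu2 x (List.mem_toFinset.2 hx)⟩
  set c' := c.rotate u hu_mem with hc'def
  have hcyc : c'.IsCycle := hc.rotate hu_mem
  have hlen : 3 ≤ c'.length := hcyc.three_le_length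
  have hmax : ∀ x ∈ c'.support, ρ x ≤ ρ u := by
    intro x hx
    rw [SimpleGraph.Walk.support_eq_cons] at hx
    rcases List.mem_cons.1 hx with rfl | hx
    · exact le_refl _
    · have hper := SimpleGraph.Walk.support_rotate c u hu_mem
      have : x ∈ c.support.tail := hper.mem_iff.1 hx
      exact hu_max x (by rw [SimpleGraph.Walk.support_eq_cons]; exact List.mem_cons_of_mem _ this)
  set a := c'.getVert 1 with ha_def
  set b := c'.getVert (c'.length - 1) with hb_def
  have hlsup : c'.support.length = c'.length + 1 := SimpleGraph.Walk.length_support c'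
  have hadj_a : G.Adj u a := by
    have := c'.adj_getVert_succ (i := 0) (by omega)
    simpa [SimpleGraph.Walk.getVert_zero] using this
  have hadj_b : G.Adj b u := by
    have := c'.adj_getVert_succ (i := c'.length - 1) (by omega)
    have h2 : c'.length - 1 + 1 = c'.length := by omega
    rw [h2, SimpleGraph.Walk.getVert_length] at this
    exact this
  have ha_mem : a ∈ c'.support := by
    rw [ha_def, ← walk_support_get c' 1 (by omega)]; exact List.get_mem _ _
  have hb_mem : b ∈ c'.support := by
    rw [hb_def, ← walk_support_get c' (c'.length - 1) (by omega)]; exact List.get_mem _ _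
  have ha_lt : ρ a < ρ u := lt_of_le_of_ne (hmax a ha_mem) (fun e => hne hadj_a e.symm)
  have hb_lt : ρ b < ρ u := lt_of_le_of_ne (hmax b hb_mem) (fun e => hne hadj_b.symm e.symm)
  have hab : a = b := huniq hadj_a hadj_b.symm ha_lt hb_lt
  -- contradiction with nodup of support tail
  have hnd : c'.support.tail.Nodup := hcyc.support_nodup
  have hta : c'.support.tail.get ⟨0, by simp [hlsup]; omega⟩ = a := by
    rw [List.get_tail _ _ _ (by simp [hlsup]; omega), walk_support_get]
  have htb : c'.support.tail.get ⟨c'.length - 2, by simp [hlsup]; omega⟩ = b := by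
    rw [List.get_tail _ _ _ (by simp [hlsup]; omega), walk_support_get]
    rw [hb_def]
    congr 1
    omega
  have := List.Nodup.get_inj_iff hnd (i := ⟨0, by simp [hlsup]; omega⟩)
      (j := ⟨c'.length - 2, by simp [hlsup]; omega⟩)
  rw [hta, htb, hab] at this
  have h0 : (⟨0, by simp [hlsup]; omega⟩ : Fin c'.support.tail.length)
      = ⟨c'.length - 2, by simp [hlsup]; omega⟩ := this.1 rfl
  have := Fin.mk.injEq .. ▸ h0
  simp only [Fin.mk.injEq] at h0
  omega

def dwR (N : ℕ) (h : ℕ → ℤ) : ℕ → ℕ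
  | 0 => 0
  | (j+1) => dwR N h (min ((h (j+1) - (N:ℤ)).toNat) j) + 2
decreasing_by exact Nat.lt_succ_of_le (min_le_right _ _)

def wLevel (N : ℕ) (h : ℕ → ℤ) (i : ℕ) : ℕ :=
  if N ≤ i then dwR N h (i - N)
  else if i = N - 1 then 2 else dwR N h (N - 1 - i)

def iLevel (N : ℕ) (h : ℕ → ℤ) (I : ℤ × ℤ) : ℕ :=
  if I.1 = (N:ℤ) then 1
  else if I.1 < (N:ℤ) then dwR N h ((h ((N:ℤ) - I.1).toNat - (N:ℤ)).toNat) + 1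
  else dwR N h ((h ((I.2 - (N:ℤ))).toNat - (N:ℤ)).toNat) + 1

section levels
variable (N : ℕ) (h : ℕ → ℤ)

lemma dwR_eq {j : ℕ} (hj1 : 1 ≤ j) (hbj : h j ≤ (N:ℤ) + j - 1) :
    dwR N h j = dwR N h ((h j - (N:ℤ)).toNat) + 2 := by
  obtain ⟨j', rfl⟩ : ∃ j', j = j' + 1 := ⟨j - 1, by omega⟩
  rw [dwR]
  congr 2
  omega

lemma wLevel_N : wLevel N h N = 0 := by simp [wLevel, dwR]

lemma wLevel_Nm1 (hN : 2 ≤ N) : wLevel N h (N-1) = 2 := by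
  rw [wLevel, if_neg (by omega), if_pos rfl]

lemma wLevel_h {j : ℕ} (hbl : (N:ℤ) ≤ h j) :
    wLevel N h (h j).toNat = dwR N h ((h j - (N:ℤ)).toNat) := by
  rw [wLevel, if_pos (by omega)]
  congr 1
  omega

lemma wLevel_Np {j : ℕ} (hj1 : 1 ≤ j) (hbj : h j ≤ (N:ℤ) + j - 1) :
    wLevel N h (N + j) = dwR N h ((h j - (N:ℤ)).toNat) + 2 := by
  rw [wLevel, if_pos (by omega), show N + j - N = j by omega]
  exact dwR_eq N h hj1 hbj

lemma wLevel_Nm {j : ℕ} (hN : 2 ≤ N) (hj1 : 1 ≤ j) (hj2 : j ≤ N - 1)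
    (hbj : h j ≤ (N:ℤ) + j - 1) :
    wLevel N h (N - 1 - j) = dwR N h ((h j - (N:ℤ)).toNat) + 2 := by
  rw [wLevel, if_neg (by omega), if_neg (by omega), show N - 1 - (N - 1 - j) = j by omega]
  exact dwR_eq N h hj1 hbj

lemma iLevel_P : iLevel N h ((N:ℤ), (N:ℤ)) = 1 := by simp [iLevel]

lemma iLevel_A {j : ℕ} (hj1 : 1 ≤ j) (hj2 : j ≤ N - 1) :
    iLevel N h ((N:ℤ) - j, h j) = dwR N h ((h j - (N:ℤ)).toNat) + 1 := by
  have hN : 1 ≤ N := by omega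
  rw [iLevel, if_neg (by simp <;> omega), if_pos (by simp <;> omega)]
  congr 3
  simp <;> omega

lemma iLevel_B {j : ℕ} (hj1 : 1 ≤ j) (hbl : (N:ℤ) ≤ h j) :
    iLevel N h (h j + 1, (N:ℤ) + j) = dwR N h ((h j - (N:ℤ)).toNat) + 1 := by
  rw [iLevel, if_neg (by simp <;> omega), if_neg (by simp <;> omega)]
  congr 3
  simp <;> omega

end levels

lemma systemGraph_adj_inl_inr (m : ℕ) {t : ℕ} (f : Fin t → ℤ × ℤ) (k : Fin t) (i : Fin m) :
    (systemGraph m f).Adj (Sum.inl k) (Sum.inr i) ↔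
      ((f k).2 = (i : ℤ) ∨ (f k).1 = (i : ℤ) + 1) := by
  simp [systemGraph, SimpleGraph.fromRel_adj]

lemma systemGraph_not_adj_inl_inl (m : ℕ) {t : ℕ} (f : Fin t → ℤ × ℤ) (k k' : Fin t) :
    ¬ (systemGraph m f).Adj (Sum.inl k) (Sum.inl k') := by
  simp [systemGraph, SimpleGraph.fromRel_adj]

lemma systemGraph_not_adj_inr_inr (m : ℕ) {t : ℕ} (f : Fin t → ℤ × ℤ) (i i' : Fin m) :
    ¬ (systemGraph m f).Adj (Sum.inr i) (Sum.inr i') := by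
  simp [systemGraph, SimpleGraph.fromRel_adj]

lemma isTree_system (N : ℕ) (hN : 2 ≤ N) (h : ℕ → ℤ)
    (hb : ∀ j : ℕ, 1 ≤ j → j ≤ N - 1 → (N : ℤ) ≤ h j ∧ h j ≤ (N : ℤ) + j - 1)
    {t : ℕ} (f : Fin t → ℤ × ℤ)
    (hmem : ∀ k, f k ∈ squareSystem N h)
    (hsurj : ∀ I ∈ squareSystem N h, ∃ k, f k = I)
    (hinj : Function.Injective f) :
    (systemGraph (2*N) f).IsTree := by
  classical
  set G := systemGraph (2*N) f with hG
  set L : ℕ → ℕ := fun j => dwR N h ((h j - (N:ℤ)).toNat) with hL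
  set ρ : (Fin t ⊕ Fin (2*N)) → ℕ :=
    Sum.elim (fun k => iLevel N h (f k)) (fun i => wLevel N h (i:ℕ)) with hρ
  -- core adjacency analysis
  have core : ∀ (k : Fin t) (i : Fin (2*N)), G.Adj (Sum.inl k) (Sum.inr i) →
      (f k = ((N:ℤ), (N:ℤ)) ∧ (i:ℕ) = N ∧ ρ (Sum.inl k) = 1 ∧ ρ (Sum.inr i) = 0) ∨
      (f k = ((N:ℤ), (N:ℤ)) ∧ (i:ℕ) = N - 1 ∧ ρ (Sum.inl k) = 1 ∧ ρ (Sum.inr i) = 2) ∨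
      (∃ j, 1 ≤ j ∧ j ≤ N - 1 ∧ f k = ((N:ℤ) - j, h j) ∧ (i:ℕ) = (h j).toNat ∧
        ρ (Sum.inl k) = L j + 1 ∧ ρ (Sum.inr i) = L j) ∨
      (∃ j, 1 ≤ j ∧ j ≤ N - 1 ∧ f k = ((N:ℤ) - j, h j) ∧ (i:ℕ) = N - 1 - j ∧
        ρ (Sum.inl k) = L j + 1 ∧ ρ (Sum.inr i) = L j + 2) ∨
      (∃ j, 1 ≤ j ∧ j ≤ N - 1 ∧ f k = (h j + 1, (N:ℤ) + j) ∧ (i:ℕ) = (h j).toNat ∧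
        ρ (Sum.inl k) = L j + 1 ∧ ρ (Sum.inr i) = L j) ∨
      (∃ j, 1 ≤ j ∧ j ≤ N - 1 ∧ f k = (h j + 1, (N:ℤ) + j) ∧ (i:ℕ) = N + j ∧
        ρ (Sum.inl k) = L j + 1 ∧ ρ (Sum.inr i) = L j + 2) := by
    intro k i hadj
    rw [hG, systemGraph_adj_inl_inr] at hadj
    have hiv : ((i:ℕ):ℤ) = (i:ℤ) := rfl
    have hilt : (i:ℕ) < 2*N := i.isLt
    rcases mem_squareSystem.1 (hmem k) with hP | ⟨j, hj1, hj2, hA | hB⟩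
    · rcases hadj with he | he <;> rw [hP] at he ⊢ <;> simp only at he
      · left
        have hi : (i:ℕ) = N := by omega
        refine ⟨rfl, hi, ?_, ?_⟩
        · simp only [hρ, Sum.elim_inl, hP]; exact iLevel_P N h
        · simp only [hρ, Sum.elim_inr, hi]; exact wLevel_N N h
      · right; left
        have hi : (i:ℕ) = N - 1 := by omega
        refine ⟨rfl, hi, ?_, ?_⟩
        · simp only [hρ, Sum.elim_inl, hP]; exact iLevel_P N h
        · simp only [hρ, Sum.elim_inr, hi]; exact wLevel_Nm1 N h hN
    · obtain ⟨hbl, hbr⟩ := hb j hj1 hj2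
      rcases hadj with he | he <;> rw [hA] at he ⊢ <;> simp only at he
      · right; right; left
        have hi : (i:ℕ) = (h j).toNat := by omega
        refine ⟨j, hj1, hj2, rfl, hi, ?_, ?_⟩
        · simp only [hρ, Sum.elim_inl, hA, hL]; exact iLevel_A N h hj1 hj2
        · simp only [hρ, Sum.elim_inr, hi, hL]; exact wLevel_h N h hbl
      · right; right; right; left
        have hi : (i:ℕ) = N - 1 - j := by omega
        refine ⟨j, hj1, hj2, rfl, hi, ?_, ?_⟩
        · simp only [hρ, Sum.elim_inl, hA, hL]; exact iLevel_A N h hj1 hj2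
        · simp only [hρ, Sum.elim_inr, hi, hL]; exact wLevel_Nm N h hN hj1 hj2 hbr
    · obtain ⟨hbl, hbr⟩ := hb j hj1 hj2
      rcases hadj with he | he <;> rw [hB] at he ⊢ <;> simp only at he
      · right; right; right; right; right
        have hi : (i:ℕ) = N + j := by omega
        refine ⟨j, hj1, hj2, rfl, hi, ?_, ?_⟩
        · simp only [hρ, Sum.elim_inl, hB, hL]; exact iLevel_B N h hj1 hbl
        · simp only [hρ, Sum.elim_inr, hi, hL]; exact wLevel_Np N h hj1 hbr
      · right; right; right; right; left
        have hi : (i:ℕ) = (h j).toNat := by omega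
        refine ⟨j, hj1, hj2, rfl, hi, ?_, ?_⟩
        · simp only [hρ, Sum.elim_inl, hB, hL]; exact iLevel_B N h hj1 hbl
        · simp only [hρ, Sum.elim_inr, hi, hL]; exact wLevel_h N h hbl
  -- helpers for distinguishing intervals
  have hiz : ∀ i : Fin (2*N), (i:ℤ) = ((i:ℕ):ℤ) := fun i => rfl
  have PA : ∀ j : ℕ, 1 ≤ j → j ≤ N - 1 → ((N:ℤ), (N:ℤ)) ≠ ((N:ℤ) - j, h j) := by
    intro j h1 h2 e
    have := congrArg Prod.fst e; simp only at this; omega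
  have PB : ∀ j : ℕ, 1 ≤ j → j ≤ N - 1 → ((N:ℤ), (N:ℤ)) ≠ (h j + 1, (N:ℤ) + j) := by
    intro j h1 h2 e
    have := congrArg Prod.fst e; simp only at this
    have := (hb j h1 h2).1; omega
  have AB : ∀ j j' : ℕ, 1 ≤ j → j ≤ N - 1 → 1 ≤ j' → j' ≤ N - 1 →
      ((N:ℤ) - j, h j) ≠ (h j' + 1, (N:ℤ) + j') := by
    intro j j' h1 h2 h1' h2' e
    have := congrArg Prod.fst e; simp only at this
    have := (hb j' h1' h2').1; omega
  have AA : ∀ j j' : ℕ, ((N:ℤ) - j, h j) = ((N:ℤ) - j', h j') → j = j' := by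
    intro j j' e
    have := congrArg Prod.fst e; simp only at this; omega
  have BB : ∀ j j' : ℕ, (h j + 1, (N:ℤ) + j) = (h j' + 1, (N:ℤ) + j') → j = j' := by
    intro j j' e
    have := congrArg Prod.snd e; simp only at this; omega
  -- smaller-neighbour characterisations
  have small_inr : ∀ (k : Fin t) (i : Fin (2*N)), G.Adj (Sum.inl k) (Sum.inr i) →
      ρ (Sum.inr i) < ρ (Sum.inl k) →
      (f k = ((N:ℤ), (N:ℤ)) ∧ (i:ℕ) = N) ∨
      (∃ j, 1 ≤ j ∧ j ≤ N - 1 ∧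
        (f k = ((N:ℤ) - j, h j) ∨ f k = (h j + 1, (N:ℤ) + j)) ∧ (i:ℕ) = (h j).toNat) := by
    intro k i hadj hlt
    rcases core k i hadj with ⟨e,hi,r1,r2⟩|⟨e,hi,r1,r2⟩|⟨j,h1,h2,e,hi,r1,r2⟩|
      ⟨j,h1,h2,e,hi,r1,r2⟩|⟨j,h1,h2,e,hi,r1,r2⟩|⟨j,h1,h2,e,hi,r1,r2⟩
    · exact Or.inl ⟨e, hi⟩
    · rw [r1, r2] at hlt; omega
    · exact Or.inr ⟨j, h1, h2, Or.inl e, hi⟩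
    · rw [r1, r2] at hlt; omega
    · exact Or.inr ⟨j, h1, h2, Or.inr e, hi⟩
    · rw [r1, r2] at hlt; omega
  have small_inl : ∀ (k : Fin t) (i : Fin (2*N)), G.Adj (Sum.inl k) (Sum.inr i) →
      ρ (Sum.inl k) < ρ (Sum.inr i) →
      (f k = ((N:ℤ), (N:ℤ)) ∧ (i:ℕ) = N - 1) ∨
      (∃ j, 1 ≤ j ∧ j ≤ N - 1 ∧ f k = ((N:ℤ) - j, h j) ∧ (i:ℕ) = N - 1 - j) ∨
      (∃ j, 1 ≤ j ∧ j ≤ N - 1 ∧ f k = (h j + 1, (N:ℤ) + j) ∧ (i:ℕ) = N + j) := by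
    intro k i hadj hlt
    rcases core k i hadj with ⟨e,hi,r1,r2⟩|⟨e,hi,r1,r2⟩|⟨j,h1,h2,e,hi,r1,r2⟩|
      ⟨j,h1,h2,e,hi,r1,r2⟩|⟨j,h1,h2,e,hi,r1,r2⟩|⟨j,h1,h2,e,hi,r1,r2⟩
    · rw [r1, r2] at hlt; omega
    · exact Or.inl ⟨e, hi⟩
    · rw [r1, r2] at hlt; omega
    · exact Or.inr (Or.inl ⟨j, h1, h2, e, hi⟩)
    · rw [r1, r2] at hlt; omega
    · exact Or.inr (Or.inr ⟨j, h1, h2, e, hi⟩)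
  -- acyclicity
  have hacyc : G.IsAcyclic := by
    apply isAcyclic_of_level G ρ
    · rintro (k | i) (k' | i') hadj
      · exact absurd hadj (systemGraph_not_adj_inl_inl _ _ _ _)
      · rcases core k i' hadj with ⟨e,hi,r1,r2⟩|⟨e,hi,r1,r2⟩|⟨j,h1,h2,e,hi,r1,r2⟩|
          ⟨j,h1,h2,e,hi,r1,r2⟩|⟨j,h1,h2,e,hi,r1,r2⟩|⟨j,h1,h2,e,hi,r1,r2⟩ <;>
          rw [r1, r2] <;> omega
      · rcases core k' i hadj.symm with ⟨e,hi,r1,r2⟩|⟨e,hi,r1,r2⟩|⟨j,h1,h2,e,hi,r1,r2⟩|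
          ⟨j,h1,h2,e,hi,r1,r2⟩|⟨j,h1,h2,e,hi,r1,r2⟩|⟨j,h1,h2,e,hi,r1,r2⟩ <;>
          rw [r1, r2] <;> omega
      · exact absurd hadj (systemGraph_not_adj_inr_inr _ _ _ _)
    · rintro (k | i) (k' | i') (k'' | i'') hadj1 hadj2 hlt1 hlt2
      · exact absurd hadj1 (systemGraph_not_adj_inl_inl _ _ _ _)
      · exact absurd hadj1 (systemGraph_not_adj_inl_inl _ _ _ _)
      · exact absurd hadj2 (systemGraph_not_adj_inl_inl _ _ _ _)
      · -- v = inl k, both neighbours inr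
        rcases small_inr k i' hadj1 hlt1 with ⟨e1, hi1⟩ | ⟨j, h1, h2, e1, hi1⟩ <;>
          rcases small_inr k i'' hadj2 hlt2 with ⟨e2, hi2⟩ | ⟨j', h1', h2', e2, hi2⟩
        · congr 1; exact Fin.ext (hi1.trans hi2.symm)
        · exfalso
          rcases e2 with e2 | e2
          · exact PA j' h1' h2' (e1 ▸ e2)
          · exact PB j' h1' h2' (e1 ▸ e2)
        · exfalso
          rcases e1 with e1 | e1
          · exact PA j h1 h2 (e2 ▸ e1)
          · exact PB j h1 h2 (e2 ▸ e1)
        · have hjj : j = j' := by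
            rcases e1 with e1 | e1 <;> rcases e2 with e2 | e2
            · exact AA j j' (e1.symm.trans e2)
            · exact absurd (e1.symm.trans e2) (AB j j' h1 h2 h1' h2')
            · exact absurd (e2.symm.trans e1) (AB j' j h1' h2' h1 h2)
            · exact BB j j' (e1.symm.trans e2)
          subst hjj
          congr 1; exact Fin.ext (hi1.trans hi2.symm)
      · -- v = inr i, both neighbours inl
        rcases small_inl k' i hadj1.symm hlt1 with ⟨e1, hi1⟩ | ⟨j, h1, h2, e1, hi1⟩ | ⟨j, h1, h2, e1, hi1⟩ <;>
          rcases small_inl k'' i hadj2.symm hlt2 with ⟨e2, hi2⟩ | ⟨j', h1', h2', e2, hi2⟩ | ⟨j', h1', h2', e2, hi2⟩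
        · exact congrArg Sum.inl (hinj (e1.trans e2.symm))
        · omega
        · omega
        · omega
        · have : j = j' := by omega
          subst this
          exact congrArg Sum.inl (hinj (e1.trans e2.symm))
        · omega
        · omega
        · omega
        · have : j = j' := by omega
          subst this
          exact congrArg Sum.inl (hinj (e1.trans e2.symm))
      · exact absurd hadj2 (systemGraph_not_adj_inr_inr _ _ _ _)
      · exact absurd hadj1 (systemGraph_not_adj_inr_inr _ _ _ _)
      · exact absurd hadj1 (systemGraph_not_adj_inr_inr _ _ _ _)
  -- connectivity
  obtain ⟨k0, hk0⟩ := hsurj ((N:ℤ), (N:ℤ)) (mem_squareSystem.2 (Or.inl rfl))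
  have hNlt : N < 2*N := by omega
  set root : Fin t ⊕ Fin (2*N) := Sum.inr ⟨N, hNlt⟩ with hroot
  have adjR : ∀ (k : Fin t) (i : Fin (2*N)), (f k).2 = ((i:ℕ):ℤ) →
      G.Adj (Sum.inl k) (Sum.inr i) := by
    intro k i he
    rw [hG, systemGraph_adj_inl_inr]
    exact Or.inl (he.trans (hiz i).symm)
  have adjL : ∀ (k : Fin t) (i : Fin (2*N)), (f k).1 = ((i:ℕ):ℤ) + 1 →
      G.Adj (Sum.inl k) (Sum.inr i) := by
    intro k i he
    rw [hG, systemGraph_adj_inl_inr]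
    exact Or.inr (he.trans (by rw [hiz i]))
  have hreach : ∀ j : ℕ, j ≤ N - 1 → ∀ i : Fin (2*N),
      N - 1 - j ≤ (i:ℕ) → (i:ℕ) ≤ N + j → G.Reachable root (Sum.inr i) := by
    intro j
    induction j with
    | zero =>
      intro _ i hi1 hi2
      rcases (by omega : (i:ℕ) = N - 1 ∨ (i:ℕ) = N) with hi | hi
      · refine ((adjR k0 ⟨N, hNlt⟩ (by rw [hk0])).symm.reachable).trans
          ((adjL k0 i ?_).reachable)
        rw [hk0, hi]
        push_cast
        omega
      · have : Sum.inr i = root := by rw [hroot]; congr 1; exact Fin.ext hi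
        rw [this]
    | succ j ih =>
      intro hj1 i hi1 hi2
      by_cases hcase : N - 1 - j ≤ (i:ℕ) ∧ (i:ℕ) ≤ N + j
      · exact ih (by omega) i hcase.1 hcase.2
      · obtain ⟨hbl, hbr⟩ := hb (j+1) (by omega) (by omega)
        have hq : (h (j+1)).toNat < 2*N := by omega
        have hreachq : G.Reachable root (Sum.inr ⟨(h (j+1)).toNat, hq⟩) :=
          ih (by omega) _ (by simp <;> omega) (by simp <;> omega)
        rcases (by omega : (i:ℕ) = N + j + 1 ∨ (i:ℕ) = N - j - 2) with hi | hi
        · obtain ⟨kB, hkB⟩ := hsurj (h (j+1) + 1, (N:ℤ) + (j+1))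
            (mem_squareSystem.2 (Or.inr ⟨j+1, by omega, by omega, Or.inr rfl⟩))
          refine (hreachq.trans ((adjL kB _ ?_).symm.reachable)).trans
            ((adjR kB i ?_).reachable)
          · rw [hkB]; simp only; omega
          · rw [hkB]; simp only [hi]; push_cast; omega
        · obtain ⟨kA, hkA⟩ := hsurj ((N:ℤ) - (j+1), h (j+1))
            (mem_squareSystem.2 (Or.inr ⟨j+1, by omega, by omega, Or.inl rfl⟩))
          refine (hreachq.trans ((adjR kA _ ?_).symm.reachable)).trans
            ((adjL kA i ?_).reachable)
          · rw [hkA]; simp only; omega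
          · rw [hkA]; simp only [hi]; push_cast; omega
  have hreach_all : ∀ u : Fin t ⊕ Fin (2*N), G.Reachable root u := by
    rintro (k | i)
    · rcases mem_squareSystem.1 (hmem k) with hP | ⟨j, hj1, hj2, hA | hB⟩
      · exact ((adjR k ⟨N, hNlt⟩ (by rw [hP])).symm.reachable).symm.symm
      · obtain ⟨hbl, hbr⟩ := hb j hj1 hj2
        have hq : (h j).toNat < 2*N := by omega
        exact (hreach (N-1) le_rfl ⟨(h j).toNat, hq⟩ (by simp <;> omega) (by simp <;> omega)).trans
          ((adjR k _ (by rw [hA]; simp only; omega)).symm.reachable)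
      · obtain ⟨hbl, hbr⟩ := hb j hj1 hj2
        have hq : (h j).toNat < 2*N := by omega
        exact (hreach (N-1) le_rfl ⟨(h j).toNat, hq⟩ (by simp <;> omega) (by simp <;> omega)).trans
          ((adjL k _ (by rw [hB]; simp only; omega)).symm.reachable)
    · exact hreach (N-1) le_rfl i (by omega) (by omega)
  have hconn : G.Connected := by
    rw [SimpleGraph.connected_iff]
    exact ⟨fun u v => (hreach_all u).symm.trans (hreach_all v), ⟨root⟩⟩
  exact ⟨hconn, hacyc⟩

lemma isAdmissible_squareSystem (N : ℕ) (hN : 2 ≤ N) (h : ℕ → ℤ)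
    (hb : ∀ j : ℕ, 1 ≤ j → j ≤ N - 1 → (N : ℤ) ≤ h j ∧ h j ≤ (N : ℤ) + j - 1) :
    IsAdmissible (2*N) (squareSystem N h) := by
  classical
  refine ⟨(squareSystem N h).toList.length, (squareSystem N h).toList.get, ?_, ?_⟩
  · rw [List.ofFn_get]; exact Multiset.coe_toList _
  · have hnd : (squareSystem N h).toList.Nodup := by
      have := nodup_squareSystem N hN h hb
      rwa [← Multiset.coe_toList (squareSystem N h), Multiset.coe_nodup] at this
    apply isTree_system N hN h hb
    · intro k
      rw [← Multiset.mem_toList]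
      exact List.get_mem _ _
    · intro I hI
      rw [← Multiset.mem_toList, List.mem_iff_getElem] at hI
      obtain ⟨k, hk, he⟩ := hI
      exact ⟨⟨k, hk⟩, he⟩
    · exact fun k k' e => hnd.get_inj_iff.1 e

lemma isProper_squareSystem (N : ℕ) (hN : 2 ≤ N) (h : ℕ → ℤ)
    (hb : ∀ j : ℕ, 1 ≤ j → j ≤ N - 1 → (N : ℤ) ≤ h j ∧ h j ≤ (N : ℤ) + j - 1) :
    (∀ I ∈ squareSystem N h, 0 ≤ I.1 ∧ I.1 ≤ I.2 ∧ I.2 ≤ (2*N : ℤ)) ∧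
    ∀ i : ℤ, 0 ≤ i → i ≤ (2*N : ℤ) →
      ((squareSystem N h).filter fun I => I.1 ≤ i ∧ i ≤ I.2).card
        = (min i (2 * (N:ℤ) - i)).toNat := by
  constructor
  · intro I hI
    rcases mem_squareSystem.1 hI with hP | ⟨j, hj1, hj2, hA | hB⟩
    · subst hP; constructor <;> simp <;> omega
    · obtain ⟨hbl, hbr⟩ := hb j hj1 hj2
      subst hA; refine ⟨by simp; omega, by simp; omega, by simp; omega⟩
    · obtain ⟨hbl, hbr⟩ := hb j hj1 hj2
      subst hB; refine ⟨by simp; omega, by simp; omega, by simp; omega⟩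
  · intro i h0 h2
    exact count_squareSystem N hN h hb i h0 h2

lemma finite_fixed_card (A : Finset (ℤ×ℤ)) (t : ℕ) :
    {S : Multiset (ℤ×ℤ) | (∀ I ∈ S, I ∈ A) ∧ Multiset.card S = t}.Finite := by
  classical
  apply Set.Finite.subset (((A.sym t).image Sym.toMultiset).finite_toSet)
  rintro S ⟨h1, h2⟩
  simp only [Finset.coe_image, Set.mem_image, Finset.mem_coe, Finset.mem_sym_iff]
  exact ⟨⟨S, h2⟩, fun a ha => h1 a ha, rfl⟩

/-- Let `n, d ≥ 1` with `nd ≥ 2`.  The map `h ↦ Λ(h)` is injective on the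
set of tuples `(h_1, …, h_{nd-1})` of integers with `nd ≤ h_j ≤ nd + j - 1` for each `j`, and
consequently the number of admissible proper systems with parameters `m = 2nd` and
`σ(i) = min(i, 2nd - i)`, consisting of exactly `2nd - 1` intervals, is at least `(nd - 1)!`. -/
theorem statement6 (n d : ℕ) (hn : 1 ≤ n) (hd : 1 ≤ d) (hnd : 2 ≤ n * d) :
    (∀ h h' : ℕ → ℤ,
      (∀ j : ℕ, 1 ≤ j → j ≤ n * d - 1 →
        (n * d : ℤ) ≤ h j ∧ h j ≤ (n * d : ℤ) + j - 1) →
      (∀ j : ℕ, 1 ≤ j → j ≤ n * d - 1 →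
        (n * d : ℤ) ≤ h' j ∧ h' j ≤ (n * d : ℤ) + j - 1) →
      squareSystem (n * d) h = squareSystem (n * d) h' →
      ∀ j : ℕ, 1 ≤ j → j ≤ n * d - 1 → h j = h' j) ∧
    Nat.factorial (n * d - 1) ≤
      Set.ncard {S : Multiset (ℤ × ℤ) |
        IsProperSystem (2 * (n * d)) (fun i : ℤ => (min i (2 * ((n : ℤ) * d) - i)).toNat) S ∧
        IsAdmissible (2 * (n * d)) S ∧
        S.card = 2 * (n * d) - 1} := by
  have hN2 : 2 ≤ n * d := hnd
  constructor
  · intro h h' hb hb' heq j hj1 hj2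
    exact squareSystem_inj (n*d) hN2 h h' hb hb' heq j hj1 hj2
  · set N := n * d with hNdef
    classical
    set tgt := {S : Multiset (ℤ × ℤ) |
        IsProperSystem (2 * (N : ℤ)) (fun i : ℤ => (min i (2 * ((n : ℤ) * d) - i)).toNat) S ∧
        IsAdmissible (2 * N) S ∧
        Multiset.card S = 2 * N - 1} with htgt
    have hND : ((N:ℕ):ℤ) = (n:ℤ) * d := by rw [hNdef]; push_cast; ring
    set D : Finset (Fin (N-1) → ℤ) :=
      Fintype.piFinset (fun j : Fin (N-1) => Finset.Icc (N:ℤ) ((N:ℤ) + (j:ℕ))) with hD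
    set e : (Fin (N-1) → ℤ) → ℕ → ℤ :=
      fun g j => if hj : 1 ≤ j ∧ j ≤ N-1 then g ⟨j-1, by omega⟩ else (N:ℤ) with he
    have he_b : ∀ g ∈ D, ∀ j : ℕ, 1 ≤ j → j ≤ N - 1 →
        (N : ℤ) ≤ e g j ∧ e g j ≤ (N : ℤ) + j - 1 := by
      intro g hg j h1 h2
      rw [hD, Fintype.mem_piFinset] at hg
      have := hg ⟨j-1, by omega⟩
      rw [Finset.mem_Icc] at this
      have hev : e g j = g ⟨j-1, by omega⟩ := by rw [he]; simp [h1, h2]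
      rw [hev]
      simp only [Fin.val_mk] at this
      omega
    set Φ : (Fin (N-1) → ℤ) → Multiset (ℤ × ℤ) := fun g => squareSystem N (e g) with hΦ
    have hΦinj : Set.InjOn Φ D := by
      intro g hg g' hg' heq
      have := squareSystem_inj N hN2 (e g) (e g') (he_b g hg) (he_b g' hg') heq
      funext j
      have hj1 : 1 ≤ (j:ℕ) + 1 := by omega
      have hj2 : (j:ℕ) + 1 ≤ N - 1 := by have := j.isLt; omega
      have h1 := this ((j:ℕ)+1) hj1 hj2
      have hevg : e g ((j:ℕ)+1) = g j := by
        rw [he]; simp only [hj1, hj2, and_self, dite_true]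
        congr 1
      have hevg' : e g' ((j:ℕ)+1) = g' j := by
        rw [he]; simp only [hj1, hj2, and_self, dite_true]
        congr 1
      rw [hevg, hevg'] at h1
      exact h1
    have hsub : ↑(D.image Φ) ⊆ tgt := by
      intro S hS
      rw [Finset.coe_image, Set.mem_image] at hS
      obtain ⟨g, hg, rfl⟩ := hS
      obtain ⟨hp1, hp2⟩ := isProper_squareSystem N hN2 (e g) (he_b g (by exact hg))
      refine ⟨⟨?_, ?_⟩, ?_, ?_⟩
      · intro I hI
        have := hp1 I hI
        refine ⟨this.1, this.2.1, ?_⟩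
        have := this.2.2; push_cast at this ⊢; omega
      · intro i h0 h2
        have h2' : i ≤ (2*N : ℤ) := by push_cast at h2 ⊢; omega
        have := hp2 i h0 h2'
        rw [this, hND]
      · have := isAdmissible_squareSystem N hN2 (e g) (he_b g (by exact hg))
        exact this
      · exact card_squareSystem N (by omega) (e g)
    have hfin : tgt.Finite := by
      apply Set.Finite.subset (finite_fixed_card
        (Finset.Icc ((0:ℤ), (0:ℤ)) ((2*(N:ℤ)), 2*(N:ℤ))) (2*N-1))
      intro S hS
      obtain ⟨⟨hp1, _⟩, _, hcard⟩ := hS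
      refine ⟨?_, hcard⟩
      intro I hI
      obtain ⟨u1, u2, u3⟩ := hp1 I hI
      rw [Finset.mem_Icc]
      constructor <;> rw [Prod.le_def] <;> constructor <;> simp <;> push_cast at u3 ⊢ <;> omega
    have hcard_D : D.card = Nat.factorial (N - 1) := by
      rw [hD, Fintype.card_piFinset]
      have : ∀ j : Fin (N-1), (Finset.Icc (N:ℤ) ((N:ℤ) + (j:ℕ))).card = (j:ℕ) + 1 := by
        intro j
        rw [Int.card_Icc]
        omega
      rw [Finset.prod_congr rfl (fun j _ => this j)]
      rw [Fin.prod_univ_eq_prod_range (fun i => i + 1) (N-1)]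
      exact Finset.prod_range_add_one_eq_factorial (N-1)
    calc Nat.factorial (N - 1) = D.card := hcard_D.symm
      _ = (D.image Φ).card := (Finset.card_image_of_injOn hΦinj).symm
      _ = (↑(D.image Φ) : Set (Multiset (ℤ × ℤ))).ncard := (Set.ncard_coe_finset _).symm
      _ ≤ tgt.ncard := Set.ncard_le_ncard hsub hfin
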